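/- Let R be a commutative ring that is an integral domain, let I be a linearly ordered cancellative additive commutative monoid (so the order is total, addition is cancellative, and i ≤ i' together with j ≤ j' implies i + j ≤ i' + j'), and let A be an associative unital R-algebra equipped with a compatibly ordered basis indexed by I. Then A has no zero divisors: for all x, y ∈ A, if x · y = 0 then x = 0 or y = 0. -/

import Mathlib

/-- If `R` is a commutative domain, `I` a linearly ordered cancellative additive
commutative monoid, and `A` an associative unital `R`-algebra with a compatibly
ordered basis `b` indexed by `I` (i.e. `b i * b j` is a unit multiple of `b (i+j)`),
then `A` has no zero divisors. -/
theorem stated_skein_compatibly_ordered_basis_domain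
    {R : Type*} [CommRing R] [IsDomain R]
    {I : Type*} [AddCommMonoid I] [LinearOrder I] [IsOrderedCancelAddMonoid I]
    {A : Type*} [Ring A] [Algebra R A]
    (b : Module.Basis I R A)
    (hb : ∀ i j : I, ∃ u : Rˣ, b i * b j = u • b (i + j)) :
    ∀ x y : A, x * y = 0 → x = 0 ∨ y = 0 := by
  intro x y hxy
  by_contra hcon
  push_neg at hcon
  obtain ⟨hx, hy⟩ := hcon
  choose u hu using hb
  have hfx : b.repr x ≠ 0 := fun h => hx (by simpa using (LinearEquiv.map_eq_zero_iff b.repr).mp h)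
  have hfy : b.repr y ≠ 0 := fun h => hy (by simpa using (LinearEquiv.map_eq_zero_iff b.repr).mp h)
  have hsx : (b.repr x).support.Nonempty := Finsupp.support_nonempty_iff.mpr hfx
  have hsy : (b.repr y).support.Nonempty := Finsupp.support_nonempty_iff.mpr hfy
  set i0 := (b.repr x).support.max' hsx with hi0
  set j0 := (b.repr y).support.max' hsy with hj0
  have hxe : x = ∑ i ∈ (b.repr x).support, b.repr x i • b i := by
    conv_lhs => rw [← b.linearCombination_repr x]
    rw [Finsupp.linearCombination_apply, Finsupp.sum]
  have hye : y = ∑ j ∈ (b.repr y).support, b.repr y j • b j := by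
    conv_lhs => rw [← b.linearCombination_repr y]
    rw [Finsupp.linearCombination_apply, Finsupp.sum]
  have hmul : x * y = ∑ i ∈ (b.repr x).support, ∑ j ∈ (b.repr y).support,
      (b.repr x i * b.repr y j * (u i j : R)) • b (i + j) := by
    conv_lhs => rw [hxe, hye]
    rw [Finset.sum_mul]
    refine Finset.sum_congr rfl fun i _ => ?_
    rw [Finset.mul_sum]
    refine Finset.sum_congr rfl fun j _ => ?_
    rw [smul_mul_assoc, mul_smul_comm, hu i j, Units.smul_def, smul_smul, smul_smul, mul_assoc]
  have hrep : b.repr (x * y) (i0 + j0) = b.repr x i0 * b.repr y j0 * (u i0 j0 : R) := by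
    rw [hmul, map_sum, Finsupp.finset_sum_apply]
    have h1 : ∀ i ∈ (b.repr x).support,
        (b.repr (∑ j ∈ (b.repr y).support,
          (b.repr x i * b.repr y j * (u i j : R)) • b (i + j))) (i0 + j0)
        = ∑ j ∈ (b.repr y).support,
          (Finsupp.single (i + j) (b.repr x i * b.repr y j * (u i j : R)) : I →₀ R) (i0 + j0) := by
      intro i _
      rw [map_sum, Finsupp.finset_sum_apply]
      refine Finset.sum_congr rfl fun j _ => ?_
      rw [map_smul, b.repr_self, Finsupp.smul_single, smul_eq_mul, mul_one]
    rw [Finset.sum_congr rfl h1]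
    rw [Finset.sum_eq_single_of_mem i0 ((b.repr x).support.max'_mem hsx)]
    · rw [Finset.sum_eq_single_of_mem j0 ((b.repr y).support.max'_mem hsy)]
      · rw [Finsupp.single_apply, if_pos rfl]
      · intro j hj hjne
        rw [Finsupp.single_apply, if_neg]
        intro heq
        have hle : j ≤ j0 := Finset.le_max' _ _ hj
        have : i0 + j < i0 + j0 := add_lt_add_right (lt_of_le_of_ne hle hjne) i0
        exact absurd heq (ne_of_lt this)
    · intro i hi hine
      refine Finset.sum_eq_zero fun j hj => ?_
      rw [Finsupp.single_apply, if_neg]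
      intro heq
      have hle : i ≤ i0 := Finset.le_max' _ _ hi
      have hle' : j ≤ j0 := Finset.le_max' _ _ hj
      have : i + j < i0 + j0 := add_lt_add_of_lt_of_le (lt_of_le_of_ne hle hine) hle'
      exact absurd heq (ne_of_lt this)
  rw [hxy] at hrep
  simp only [map_zero, Finsupp.coe_zero, Pi.zero_apply] at hrep
  have h0x : b.repr x i0 ≠ 0 := Finsupp.mem_support_iff.mp ((b.repr x).support.max'_mem hsx)
  have h0y : b.repr y j0 ≠ 0 := Finsupp.mem_support_iff.mp ((b.repr y).support.max'_mem hsy)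
  exact mul_ne_zero (mul_ne_zero h0x h0y) (Units.ne_zero _) hrep.symm
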